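/- Let $0\le\alpha<1$, $\theta>-\alpha$, and let $\mathcal L_{\alpha,\theta} = \frac12\sum_{i,j=1}^N x_i(\delta_{ij}-x_j)\partial^2_{x_ix_j} - \frac12\sum_{i=1}^N(\theta x_i+\alpha)\partial_{x_i}$ act on polynomials in $x_1,\dots,x_N$. For an integer partition $\eta$ of $n$ with length $d$ and all parts $\eta_i\ge 2$, on the set $\{\sum_i x_i = 1\}$ one has $\mathcal L_{\alpha,\theta}\tilde P_\eta = -\frac12 n(n+\theta-1)\tilde P_\eta + \frac12\sum_{i=1}^d \eta_i(\eta_i-1-\alpha)\tilde P_{\eta-e_i}$. -/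

import Mathlib

open Finset

/-- Kingman-graph edge weight `χ(ω,η)`: for a covering pair, the increased part size is
the unique element of `η - ω`, and the weight is the number of parts of `η` of that size. -/
def chiW (ω η : Multiset ℕ) : ℕ := η.count ((η - ω).sum)

/-- The partitions covering `ω` (increase one part by `1`, or add a new part `1`). -/
def upSet (ω : Multiset ℕ) : Finset (Multiset ℕ) :=
  insert (1 ::ₘ ω) (ω.toFinset.image (fun k => (k + 1) ::ₘ ω.erase k))

/-- The partitions covered by `η` (decrease one part by `1`, deleting it if it was `1`). -/
def downSet (η : Multiset ℕ) : Finset (Multiset ℕ) :=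
  η.toFinset.image (fun k => if k = 1 then η.erase 1 else (k - 1) ::ₘ η.erase k)

/-- Total path weight from `ω` up to `η` in the Kingman graph, with fuel. -/
def kdimAux : ℕ → Multiset ℕ → Multiset ℕ → ℕ
  | 0, ω, η => if ω = η then 1 else 0
  | m + 1, ω, η => ∑ lam ∈ downSet η, chiW lam η * kdimAux m ω lam

/-- `dim(ω, η)`: total path weight from `ω` to `η`. -/
def kdim (ω η : Multiset ℕ) : ℕ := kdimAux (η.sum - ω.sum) ω η

/-- Multinomial coefficient `(|η| choose η)` as a rational. -/
def multQ (η : Multiset ℕ) : ℚ := (Nat.factorial η.sum : ℚ) / ((η.map Nat.factorial).prod : ℕ)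

/-- Multinomial coefficient as a real. -/
noncomputable def multR (η : Multiset ℕ) : ℝ := (Nat.factorial η.sum : ℝ) / ((η.map Nat.factorial).prod : ℕ)

/-- Young-diagram containment `ω ⊂ η` (componentwise on ranked parts, via conjugates). -/
def ydLE (ω η : Multiset ℕ) : Prop :=
  ∀ k, Multiset.card (ω.filter (fun a => k ≤ a)) ≤ Multiset.card (η.filter (fun a => k ≤ a))

/-- Rising factorial `a (a+1) ⋯ (a+k-1)`. -/
noncomputable def riseF (a : ℝ) (k : ℕ) : ℝ := ∏ i ∈ Finset.range k, (a + i)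

/-- Ewens–Pitman moment `m(η) = 𝔼_{α,θ}[ ̃P_η]` (the `θ`-factor cancelled form of
`∏_{l=0}^{d-1}(θ+lα)/(θ)_{(n)} ∏ (1-α)_{(η_i-1)}`). -/
noncomputable def EPM (α θ : ℝ) (η : Multiset ℕ) : ℝ :=
  (∏ l ∈ Finset.Ico 1 (Multiset.card η), (θ + l * α)) /
      (∏ i ∈ Finset.Ico 1 η.sum, (θ + i)) *
    (η.map (fun p => riseF (1 - α) (p - 1))).prod

/-- `a₁(η)! ⋯ a_n(η)!`. -/
def aprod (η : Multiset ℕ) : ℕ := ∏ k ∈ Finset.Icc 1 η.sum, Nat.factorial (η.count k)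

/-- Chinese-restaurant edge weight `χ_B(ω,η)`. -/
def chiB (ω η : Multiset ℕ) : ℕ :=
  if (η - ω).sum = 1 then 1 else ω.count ((η - ω).sum - 1)

/-- Augmented monomial symmetric function as a real-valued function. -/
noncomputable def tildePR (N : ℕ) (η : List ℕ) (x : Fin N → ℝ) : ℝ :=
  ∑ f ∈ (Finset.univ : Finset (Fin η.length → Fin N)).filter Function.Injective,
    ∏ j, x (f j) ^ η.get j

/-- Monomial symmetric function: sum over distinct rearrangements of `η`. -/
noncomputable def monoP (N : ℕ) (η : Multiset ℕ) (x : Fin N → ℝ) : ℝ :=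
  ∑ v ∈ (Finset.univ : Finset (Fin N → Fin (η.sum + 1))).filter
      (fun v => Multiset.filter (fun a => 0 < a)
        (Multiset.map (fun i => ((v i : ℕ))) (Finset.univ : Finset (Fin N)).val) = η),
    ∏ i, x i ^ ((v i : ℕ))

/-- `\vec P_η(x) = (n choose η) P_η(x)`. -/
noncomputable def vecP (N : ℕ) (η : Multiset ℕ) (x : Fin N → ℝ) : ℝ :=
  (Nat.factorial η.sum : ℝ) / ((η.map Nat.factorial).prod : ℕ) * monoP N η x

/-- Augmented monomial symmetric polynomial. -/
noncomputable def tildePoly (N : ℕ) (η : List ℕ) : MvPolynomial (Fin N) ℝ :=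
  ∑ f ∈ (Finset.univ : Finset (Fin η.length → Fin N)).filter Function.Injective,
    ∏ j, (MvPolynomial.X (f j)) ^ η.get j

/-- The operator `𝓛_{α,θ}` on polynomials. -/
noncomputable def Lop (α θ : ℝ) {N : ℕ} (p : MvPolynomial (Fin N) ℝ) :
    MvPolynomial (Fin N) ℝ :=
  MvPolynomial.C (1 / 2 : ℝ) *
      (∑ i, ∑ j, MvPolynomial.X i * ((if i = j then 1 else 0) - MvPolynomial.X j) *
        MvPolynomial.pderiv i (MvPolynomial.pderiv j p)) -
    MvPolynomial.C (1 / 2 : ℝ) *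
      (∑ i, (MvPolynomial.C θ * MvPolynomial.X i + MvPolynomial.C α) * MvPolynomial.pderiv i p)

/-- The ideal generated by `∑ xᵢ - 1` (identities on the simplex). -/
noncomputable def simplexIdeal (N : ℕ) : Ideal (MvPolynomial (Fin N) ℝ) :=
  Ideal.span {(∑ i, MvPolynomial.X i) - 1}

section LopAuxiliary
open MvPolynomial Finsupp Finset


lemma lopAux_mono_xx {N : ℕ} (s : Fin N →₀ ℕ) (i j : Fin N) :
    X i * X j * pderiv i (pderiv j (monomial s (1:ℝ))) =
      monomial s ((s j * ((s - Finsupp.single j 1 : Fin N →₀ ℕ) i) : ℕ) : ℝ) := by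
  classical
  rw [pderiv_monomial, pderiv_monomial]
  rw [show (X i : MvPolynomial (Fin N) ℝ) = monomial (Finsupp.single i 1) 1 from rfl,
    show (X j : MvPolynomial (Fin N) ℝ) = monomial (Finsupp.single j 1) 1 from rfl,
    monomial_mul, monomial_mul]
  by_cases h1 : s j = 0
  · simp [h1]
  by_cases h2 : (s - Finsupp.single j 1 : Fin N →₀ ℕ) i = 0
  · simp [h2]
  rw [Finsupp.tsub_apply, Finsupp.single_apply] at h2
  congr 1
  · congr 1
    ext a
    simp only [Finsupp.add_apply, Finsupp.tsub_apply, Finsupp.single_apply]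
    split_ifs at h2 ⊢ <;> simp_all <;> omega
  · rw [Finsupp.tsub_apply, Finsupp.single_apply]
    push_cast
    ring

lemma lopAux_mono_x2 {N : ℕ} (s : Fin N →₀ ℕ) (i : Fin N) :
    X i * pderiv i (pderiv i (monomial s (1:ℝ))) =
      monomial (s - Finsupp.single i 1) ((s i * ((s - Finsupp.single i 1 : Fin N →₀ ℕ) i) : ℕ) : ℝ) := by
  classical
  rw [pderiv_monomial, pderiv_monomial]
  rw [show (X i : MvPolynomial (Fin N) ℝ) = monomial (Finsupp.single i 1) 1 from rfl, monomial_mul]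
  by_cases h1 : s i = 0
  · simp [h1]
  by_cases h2 : (s - Finsupp.single i 1 : Fin N →₀ ℕ) i = 0
  · simp [h2]
  rw [Finsupp.tsub_apply, Finsupp.single_apply] at h2
  congr 1
  · congr 1
    ext a
    simp only [Finsupp.add_apply, Finsupp.tsub_apply, Finsupp.single_apply]
    split_ifs at h2 ⊢ <;> simp_all <;> omega
  · rw [Finsupp.tsub_apply, Finsupp.single_apply]
    push_cast
    ring

lemma lopAux_mono_x1 {N : ℕ} (s : Fin N →₀ ℕ) (i : Fin N) :
    X i * pderiv i (monomial s (1:ℝ)) = monomial s ((s i : ℕ) : ℝ) := by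
  classical
  rw [pderiv_monomial]
  rw [show (X i : MvPolynomial (Fin N) ℝ) = monomial (Finsupp.single i 1) 1 from rfl, monomial_mul]
  by_cases h1 : s i = 0
  · simp [h1]
  congr 1
  · congr 1
    ext a
    simp only [Finsupp.add_apply, Finsupp.tsub_apply, Finsupp.single_apply]
    split_ifs <;> simp_all <;> omega
  · push_cast; ring

lemma lopAux_hK {N : ℕ} (s : Fin N →₀ ℕ) :
    ∑ i : Fin N, ∑ j : Fin N, (s j * ((s - Finsupp.single j 1 : Fin N →₀ ℕ) i)) =
      (∑ i, s i) * (∑ i, s i) - (∑ i, s i) := by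
  rw [Finset.sum_comm]
  have per_j : ∀ j : Fin N, ∑ i : Fin N, (s j * ((s - Finsupp.single j 1 : Fin N →₀ ℕ) i)) =
      s j * ((∑ i, s i) - 1) := by
    intro j
    rw [← Finset.mul_sum]
    rcases Nat.eq_zero_or_pos (s j) with h | h
    · simp [h]
    congr 1
    have : ∀ i ∈ (univ : Finset (Fin N)),
        (Finsupp.single j 1 : Fin N →₀ ℕ) i ≤ s i := by
      intro i _
      rw [Finsupp.single_apply]
      split_ifs with hji
      · subst hji; omega
      · omega
    calc ∑ i : Fin N, (s - Finsupp.single j 1 : Fin N →₀ ℕ) i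
        = ∑ i : Fin N, (s i - (Finsupp.single j 1 : Fin N →₀ ℕ) i) := by
          simp [Finsupp.tsub_apply]
      _ = (∑ i, s i) - ∑ i : Fin N, (Finsupp.single j 1 : Fin N →₀ ℕ) i :=
          Finset.sum_tsub_distrib _ this
      _ = (∑ i, s i) - 1 := by
          congr 1
          simp [Finsupp.single_apply]
  rw [Finset.sum_congr rfl fun j _ => per_j j, ← Finset.sum_mul]
  generalize (∑ i, s i) = n
  cases n with
  | zero => simp
  | succ m =>
    have h : (m+1)*(m+1) = (m+1)*m + (m+1) := by ring
    simp only [Nat.add_sub_cancel]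
    omega

lemma lopAux_monomial (α θ : ℝ) {N : ℕ} (s : Fin N →₀ ℕ) :
    Lop α θ (monomial s (1:ℝ)) =
      C (-(((∑ i, s i : ℕ) : ℝ) * (((∑ i, s i : ℕ) : ℝ) + θ - 1) / 2)) * monomial s 1 +
      C (1/2 : ℝ) * ∑ i, C ((s i : ℝ) * ((s i : ℝ) - 1 - α)) *
        monomial (s - Finsupp.single i 1) 1 := by
  classical
  set n : ℕ := ∑ i, s i with hn
  rw [Lop]
  have hA : (∑ i, ∑ j, X i * ((if i = j then 1 else 0) - X j) *
      pderiv i (pderiv j (monomial s (1:ℝ)))) =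
      (∑ i, monomial (s - Finsupp.single i 1)
        ((s i * ((s - Finsupp.single i 1 : Fin N →₀ ℕ) i) : ℕ) : ℝ)) -
      monomial s ((n * n - n : ℕ) : ℝ) := by
    have step1 : ∀ i : Fin N, (∑ j, X i * ((if i = j then 1 else 0) - X j) *
        pderiv i (pderiv j (monomial s (1:ℝ)))) =
        X i * pderiv i (pderiv i (monomial s (1:ℝ))) -
        ∑ j, X i * X j * pderiv i (pderiv j (monomial s (1:ℝ))) := by
      intro i
      have : ∀ j : Fin N, X i * ((if i = j then 1 else 0) - X j) *
          pderiv i (pderiv j (monomial s (1:ℝ))) =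
          (if i = j then X i * pderiv i (pderiv j (monomial s (1:ℝ))) else 0) -
          X i * X j * pderiv i (pderiv j (monomial s (1:ℝ))) := by
        intro j; split_ifs <;> ring
      rw [Finset.sum_congr rfl fun j _ => this j, Finset.sum_sub_distrib,
        Finset.sum_ite_eq, if_pos (Finset.mem_univ i)]
    rw [Finset.sum_congr rfl fun i _ => step1 i, Finset.sum_sub_distrib]
    congr 1
    · exact Finset.sum_congr rfl fun i _ => lopAux_mono_x2 s i
    · have : ∀ i : Fin N, (∑ j, X i * X j * pderiv i (pderiv j (monomial s (1:ℝ)))) =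
          monomial s ((∑ j, s j * ((s - Finsupp.single j 1 : Fin N →₀ ℕ) i) : ℕ) : ℝ) := by
        intro i
        rw [Finset.sum_congr rfl fun j _ => lopAux_mono_xx s i j, ← map_sum]
        rw [← Nat.cast_sum]
      rw [Finset.sum_congr rfl fun i _ => this i, ← map_sum, ← Nat.cast_sum, lopAux_hK s]
  have hB : (∑ i, (C θ * X i + C α) * pderiv i (monomial s (1:ℝ))) =
      C θ * monomial s ((n : ℕ) : ℝ) +
      C α * ∑ i, monomial (s - Finsupp.single i 1) ((s i : ℕ) : ℝ) := by
    have : ∀ i : Fin N, (C θ * X i + C α) * pderiv i (monomial s (1:ℝ)) =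
        C θ * (X i * pderiv i (monomial s (1:ℝ))) + C α * pderiv i (monomial s (1:ℝ)) := by
      intro i; ring
    rw [Finset.sum_congr rfl fun i _ => this i, Finset.sum_add_distrib,
      ← Finset.mul_sum, ← Finset.mul_sum]
    congr 2
    · rw [Finset.sum_congr rfl fun i _ => lopAux_mono_x1 s i, ← map_sum]
      norm_cast
    · exact Finset.sum_congr rfl fun i _ => by rw [pderiv_monomial, one_mul]
  rw [hA, hB]
  simp only [mul_sub, mul_add, Finset.mul_sum, C_mul_monomial, ← C_mul, C_mul_monomial]
  have hre : ∀ A B P Q : MvPolynomial (Fin N) ℝ, A - P - (Q + B) = (A - B) + (-P - Q) := by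
    intro A B P Q; ring
  rw [hre, ← Finset.sum_sub_distrib, ← map_neg, ← map_sub, add_comm]
  have hcast : ((n * n - n : ℕ) : ℝ) = (n : ℝ) * n - n := by
    have hle : n ≤ n * n := by
      cases n with
      | zero => simp
      | succ m => exact Nat.le_mul_of_pos_left _ (Nat.succ_pos m)
    push_cast [Nat.cast_sub hle]
    ring
  congr 1
  · congr 1
    rw [hcast]
    ring
  · refine Finset.sum_congr rfl fun x _ => ?_
    rw [← map_sub]
    congr 1
    rw [Finsupp.tsub_apply, Finsupp.single_apply, if_pos rfl]
    rcases Nat.eq_zero_or_pos (s x) with h | h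
    · simp [h]
    · push_cast [Nat.cast_sub h]
      ring

lemma lopAux_sum (α θ : ℝ) {N : ℕ} {ι : Type*} (t : Finset ι)
    (p : ι → MvPolynomial (Fin N) ℝ) :
    Lop α θ (∑ x ∈ t, p x) = ∑ x ∈ t, Lop α θ (p x) := by
  unfold Lop
  simp only [map_sum, Finset.mul_sum, Finset.sum_sub_distrib]
  congr 1
  · rw [Finset.sum_congr rfl fun x (_ : x ∈ (univ : Finset (Fin N))) =>
      Finset.sum_comm (s := (univ : Finset (Fin N))) (t := t)]
    rw [Finset.sum_comm]
  · rw [Finset.sum_comm]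

/-- exponent of the monomial attached to `f`. -/
noncomputable def lopExpo {N : ℕ} (l : List ℕ) (f : Fin l.length → Fin N) : Fin N →₀ ℕ :=
  ∑ j, Finsupp.single (f j) (l.get j)

lemma lopAux_tildePoly_eq (N : ℕ) (l : List ℕ) :
    tildePoly N l = ∑ f ∈ (Finset.univ : Finset (Fin l.length → Fin N)).filter
      Function.Injective, monomial (lopExpo l f) (1:ℝ) := by
  refine Finset.sum_congr rfl fun f _ => ?_
  rw [lopExpo, monomial_sum_one]
  exact Finset.prod_congr rfl fun j _ => by rw [X_pow_eq_monomial]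

lemma lopAux_expo_apply {N : ℕ} (l : List ℕ) (f : Fin l.length → Fin N)
    (hf : Function.Injective f) (k : Fin l.length) : lopExpo l f (f k) = l.get k := by
  rw [lopExpo, Finset.sum_apply']
  rw [Finset.sum_eq_single_of_mem k (mem_univ k)]
  · rw [Finsupp.single_apply, if_pos rfl]
  · intro j _ hj
    rw [Finsupp.single_apply, if_neg (fun h => hj (hf h))]

lemma lopAux_expo_apply_zero {N : ℕ} (l : List ℕ) (f : Fin l.length → Fin N)
    (i : Fin N) (hi : ∀ k, f k ≠ i) : lopExpo l f i = 0 := by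
  rw [lopExpo, Finset.sum_apply']
  exact Finset.sum_eq_zero fun j _ => by
    rw [Finsupp.single_apply, if_neg (hi j)]

lemma lopAux_expo_total {N : ℕ} (l : List ℕ) (f : Fin l.length → Fin N) :
    ∑ i : Fin N, lopExpo l f i = l.sum := by
  simp only [lopExpo, Finset.sum_apply']
  rw [Finset.sum_comm]
  have : ∀ j : Fin l.length, ∑ i : Fin N, (Finsupp.single (f j) (l.get j) : Fin N →₀ ℕ) i
      = l.get j := by
    intro j
    simp [Finsupp.single_apply]
  rw [Finset.sum_congr rfl fun j _ => this j]
  conv_rhs => rw [← List.ofFn_get l]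
  rw [List.sum_ofFn]

lemma lopAux_tildePoly_set (N : ℕ) (l : List ℕ) (k : Fin l.length) (hk : 1 ≤ l.get k) :
    tildePoly N (l.set k (l.get k - 1)) =
      ∑ f ∈ (Finset.univ : Finset (Fin l.length → Fin N)).filter Function.Injective,
        monomial (lopExpo l f - Finsupp.single (f k) 1) (1:ℝ) := by
  classical
  set l' := l.set k (l.get k - 1) with hl'
  have e : l'.length = l.length := List.length_set
  rw [lopAux_tildePoly_eq]
  refine Finset.sum_nbij' (fun g => g ∘ Fin.cast e.symm) (fun f => f ∘ Fin.cast e)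
    ?_ ?_ ?_ ?_ ?_
  · intro g hg
    rw [Finset.mem_filter] at hg ⊢
    exact ⟨mem_univ _, hg.2.comp fun a b h => Fin.ext (by simpa using congrArg Fin.val h)⟩
  · intro f hf
    rw [Finset.mem_filter] at hf ⊢
    exact ⟨mem_univ _, hf.2.comp fun a b h => Fin.ext (by simpa using congrArg Fin.val h)⟩
  · intro g _; funext j; simp
  · intro f _; funext j; simp
  · intro g hg
    rw [Finset.mem_filter] at hg
    congr 1
    congr 1
    have hstep : lopExpo l' g =
        ∑ j : Fin l.length, Finsupp.single (g (Fin.cast e.symm j))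
          (if k.val = j.val then l.get k - 1 else l.get j) := by
      rw [lopExpo]
      refine Fintype.sum_equiv (finCongr e) _ _ fun x => ?_
      congr 1
      show l'.get x = _
      simp only [List.get_eq_getElem, hl', List.getElem_set, finCongr_apply, Fin.coe_cast]
    rw [hstep]
    refine eq_tsub_of_add_eq ?_
    rw [lopExpo]
    rw [← Finset.add_sum_erase _ _ (mem_univ k),
      ← Finset.add_sum_erase _ (fun j => Finsupp.single ((g ∘ Fin.cast e.symm) j) (l.get j))
        (mem_univ k)]
    have herase : ∑ j ∈ univ.erase k, Finsupp.single (g (Fin.cast e.symm j))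
        (if k.val = j.val then l.get k - 1 else l.get j) =
        ∑ j ∈ univ.erase k, Finsupp.single ((g ∘ Fin.cast e.symm) j) (l.get j) := by
      refine Finset.sum_congr rfl fun j hj => ?_
      rw [if_neg]
      · rfl
      · exact fun h => (Finset.mem_erase.mp hj).1 (Fin.ext h.symm)
    rw [herase, if_pos rfl, add_right_comm]
    congr 1
    show _ + (Finsupp.single (g (Fin.cast e.symm k)) 1 : Fin N →₀ ℕ) = _
    rw [← Finsupp.single_add]
    show _ = Finsupp.single (g (Fin.cast e.symm k)) (l.get k)
    congr 1
    omega


end LopAuxiliary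

open MvPolynomial in
/-- Action of `𝓛_{α,θ}` on `̃P_η` when all parts of `η` are at least `2`,
as an identity modulo the ideal generated by `∑ xᵢ - 1`. -/
theorem generator_on_tildeP_no_singletons (α θ : ℝ) (hα0 : 0 ≤ α) (hα1 : α < 1)
    (hθ : -α < θ) (n d N : ℕ) (η : List ℕ) (hpos : ∀ a ∈ η, 2 ≤ a)
    (hsum : η.sum = n) (hlen : η.length = d) (hN : n ≤ N) :
    Ideal.Quotient.mk (simplexIdeal N) (Lop α θ (tildePoly N η)) =
      Ideal.Quotient.mk (simplexIdeal N)
        (C (-((n : ℝ) * ((n : ℝ) + θ - 1) / 2)) * tildePoly N η +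
          C (1 / 2 : ℝ) *
            ∑ i ∈ Finset.range d,
              C ((η.getD i 0 : ℝ) * ((η.getD i 0 : ℝ) - 1 - α)) *
                tildePoly N (η.set i (η.getD i 0 - 1))) := by
  classical
  subst hsum hlen
  refine congrArg _ ?_
  -- rewrite the RHS range-sum as a Fin sum and each tildePoly via lopAux lemmas
  have hget : ∀ k : Fin η.length, η.getD k.val 0 = η.get k := fun k =>
    (List.getD_eq_getElem η 0 k.isLt).trans rfl
  have hset : ∀ k : Fin η.length,
      tildePoly N (η.set k.val (η.getD k.val 0 - 1)) =
        ∑ f ∈ (Finset.univ : Finset (Fin η.length → Fin N)).filter Function.Injective,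
          monomial (lopExpo η f - Finsupp.single (f k) 1) (1:ℝ) := by
    intro k
    rw [hget k]
    exact lopAux_tildePoly_set N η k (le_trans one_le_two (hpos _ (List.get_mem η k)))
  -- LHS
  rw [lopAux_tildePoly_eq, lopAux_sum]
  have step : ∀ f ∈ (Finset.univ : Finset (Fin η.length → Fin N)).filter Function.Injective,
      Lop α θ (monomial (lopExpo η f) (1:ℝ)) =
        C (-((η.sum : ℝ) * ((η.sum : ℝ) + θ - 1) / 2)) * monomial (lopExpo η f) 1 +
        C (1/2 : ℝ) * ∑ k : Fin η.length,
          C ((η.get k : ℝ) * ((η.get k : ℝ) - 1 - α)) *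
            monomial (lopExpo η f - Finsupp.single (f k) 1) 1 := by
    intro f hf
    rw [Finset.mem_filter] at hf
    rw [lopAux_monomial α θ (lopExpo η f), lopAux_expo_total]
    congr 1
    congr 1
    -- reduce the Fin N sum to the Fin η.length sum
    have hvan : ∀ i ∈ (univ : Finset (Fin N)), i ∉ (univ : Finset (Fin η.length)).image f →
        C ((lopExpo η f i : ℝ) * ((lopExpo η f i : ℝ) - 1 - α)) *
          monomial (lopExpo η f - Finsupp.single i 1) (1:ℝ) = 0 := by
      intro i _ hi
      have h0 : lopExpo η f i = 0 := by
        refine lopAux_expo_apply_zero η f i fun k hk => ?_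
        exact hi (Finset.mem_image.mpr ⟨k, mem_univ k, hk⟩)
      rw [h0]
      simp
    rw [← Finset.sum_subset (Finset.subset_univ ((univ : Finset (Fin η.length)).image f)) hvan,
      Finset.sum_image (fun a _ b _ h => hf.2 h)]
    refine Finset.sum_congr rfl fun k _ => ?_
    rw [lopAux_expo_apply η f hf.2 k]
  rw [Finset.sum_congr rfl step]
  -- RHS
  rw [← Fin.sum_univ_eq_sum_range
    (fun i => C ((η.getD i 0 : ℝ) * ((η.getD i 0 : ℝ) - 1 - α)) *
      tildePoly N (η.set i (η.getD i 0 - 1)))]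
  rw [Finset.sum_congr rfl fun (k : Fin η.length) _ => by rw [hset k, hget k]]
  -- final algebra
  rw [Finset.sum_add_distrib]
  congr 1
  · rw [Finset.mul_sum]
  · simp only [Finset.mul_sum]
    rw [Finset.sum_comm]
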